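/- Let A be a real d×d matrix and w ∈ ℝ. If λ is an eigenvalue of the 3d×3d block matrix G = [[-wI, -Aᵀ, 0], [0, -I, A], [I, 0, 0]], then det(λ(1+λ)(w+λ)I + AᵀA) = 0. -/

import Mathlib

open Matrix

/-- The 3d×3d block matrix G = [[-wI, -Aᵀ, 0], [0, -I, A], [I, 0, 0]]. -/
noncomputable def blockG {d : ℕ} (A : Matrix (Fin d) (Fin d) ℝ) (w : ℝ) :
    Matrix (Fin d ⊕ (Fin d ⊕ Fin d)) (Fin d ⊕ (Fin d ⊕ Fin d)) ℝ :=
  Matrix.fromBlocks (-w • (1 : Matrix (Fin d) (Fin d) ℝ))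
    (Matrix.fromCols (-Aᵀ) 0)
    (Matrix.fromRows 0 1)
    (Matrix.fromBlocks (-1) A 0 0)

theorem eigenvalue_blockG_det_eq_zero {d : ℕ} (A : Matrix (Fin d) (Fin d) ℝ) (w : ℝ)
    (lam : ℂ) (hlam : lam ∈ spectrum ℂ ((blockG A w).map (algebraMap ℝ ℂ))) :
    ((lam * (1 + lam) * (w + lam)) • (1 : Matrix (Fin d) (Fin d) ℂ) +
      (Aᵀ * A).map (algebraMap ℝ ℂ)).det = 0 := by
  set f := algebraMap ℝ ℂ with hf
  set A' : Matrix (Fin d) (Fin d) ℂ := A.map f with hA'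
  -- rewrite the mapped block matrix
  have hGeq : (blockG A w).map f =
      Matrix.fromBlocks ((-(w:ℂ)) • (1 : Matrix (Fin d) (Fin d) ℂ))
        (Matrix.fromCols (-A'ᵀ) 0)
        (Matrix.fromRows 0 1)
        (Matrix.fromBlocks (-1) A' 0 0) := by
    ext (i | (i | i)) (j | (j | j)) <;>
      simp [blockG, Matrix.fromBlocks, Matrix.fromCols,
        Matrix.map_apply, Matrix.one_apply, apply_ite f, hA', hf, Complex.coe_algebraMap,
        Matrix.fromRows_apply_inl, Matrix.fromRows_apply_inr] <;>
      split_ifs <;> simp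
  rw [spectrum.mem_iff] at hlam
  have hdet : ((algebraMap ℂ _ lam) - (blockG A w).map f).det = 0 := by
    by_contra h
    exact hlam ((Matrix.isUnit_iff_isUnit_det _).2 (isUnit_iff_ne_zero.2 h))
  rw [← Matrix.exists_mulVec_eq_zero_iff] at hdet
  obtain ⟨v, hv0, hv⟩ := hdet
  have hmul : ((blockG A w).map f) *ᵥ v = lam • v := by
    have := hv
    rw [Algebra.algebraMap_eq_smul_one, Matrix.sub_mulVec, Matrix.smul_mulVec,
      Matrix.one_mulVec, sub_eq_zero] at this
    exact this.symm
  set x : Fin d → ℂ := fun i => v (Sum.inl i) with hx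
  set y : Fin d → ℂ := fun i => v (Sum.inr (Sum.inl i)) with hy
  set z : Fin d → ℂ := fun i => v (Sum.inr (Sum.inr i)) with hz
  have hvel : v = Sum.elim x (Sum.elim y z) := by
    funext i; rcases i with i | (i | i) <;> rfl
  rw [hvel, hGeq] at hmul
  simp only [Matrix.fromBlocks_mulVec, Sum.elim_comp_inl, Sum.elim_comp_inr,
    Matrix.fromCols_mulVec_sumElim, Matrix.fromRows_mulVec,
    Matrix.fromBlocks_mulVec] at hmul
  -- extract the three equations
  have E1 : ∀ i, (-(w:ℂ)) * x i + (-A'ᵀ *ᵥ y) i = lam * x i := by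
    intro i
    have := congrFun hmul (Sum.inl i)
    simpa [Matrix.neg_mulVec, Matrix.smul_mulVec, Matrix.one_mulVec,
      neg_smul, Pi.neg_apply, Pi.smul_apply, smul_eq_mul] using this
  have E2 : ∀ i, -(y i) + (A' *ᵥ z) i = lam * y i := by
    intro i
    have := congrFun hmul (Sum.inr (Sum.inl i))
    simpa [Matrix.neg_mulVec, Matrix.one_mulVec, Pi.neg_apply] using this
  have E3 : ∀ i, x i = lam * z i := by
    intro i
    have := congrFun hmul (Sum.inr (Sum.inr i))
    simpa using this
  have hAz : A' *ᵥ z = (1 + lam) • y := by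
    funext i
    have := E2 i
    simp only [Pi.smul_apply, smul_eq_mul]
    linear_combination this
  have hAty : A'ᵀ *ᵥ y = (-(w + lam) * lam) • z := by
    funext i
    have h1 := E1 i
    have h3 := E3 i
    simp only [Matrix.neg_mulVec, Pi.neg_apply] at h1
    simp only [Pi.smul_apply, smul_eq_mul]
    linear_combination -h1 - (w + lam) * h3
  have hmapgoal : (Aᵀ * A).map f = A'ᵀ * A' := by
    rw [Matrix.map_mul, Matrix.transpose_map]
  rw [hmapgoal]
  by_cases hzz : z = 0
  · -- then x = 0, and y ≠ 0 with (1+lam) • y = 0, so lam = -1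
    have hxz : x = 0 := by
      funext i; rw [E3 i, hzz]; simp
    have hyne : y ≠ 0 := by
      intro hy0
      apply hv0
      rw [hvel, hxz, hy0, hzz]
      funext i; rcases i with i | (i | i) <;> rfl
    have hlm : (1 : ℂ) + lam = 0 := by
      by_contra h
      apply hyne
      funext i
      have := E2 i
      rw [hzz] at this
      simp only [Matrix.mulVec_zero, Pi.zero_apply] at this
      have : (1 + lam) * y i = 0 := by linear_combination -this
      exact (mul_eq_zero.1 this).resolve_left h
    have hc : lam * (1 + lam) * ((w:ℂ) + lam) = 0 := by rw [hlm]; ring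
    rw [hc, zero_smul, zero_add, Matrix.det_mul]
    have hdetAt : A'ᵀ.det = 0 := by
      rw [← Matrix.exists_mulVec_eq_zero_iff]
      refine ⟨y, hyne, ?_⟩
      rw [hAty, hxz] at *
      rw [hAty, hzz]
      simp
    rw [hdetAt, zero_mul]
  · rw [← Matrix.exists_mulVec_eq_zero_iff]
    refine ⟨z, hzz, ?_⟩
    rw [Matrix.add_mulVec, Matrix.smul_mulVec, Matrix.one_mulVec,
      ← Matrix.mulVec_mulVec, hAz, Matrix.mulVec_smul, hAty]
    funext i
    simp only [Pi.add_apply, Pi.smul_apply, smul_eq_mul, Pi.zero_apply]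
    ring
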